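/- Let D = d/dx act on smooth complex-valued functions on ℝ and let S denote multiplication by sin(λx), λ ∈ ℝ. Then for every odd natural number n, B(n, iλ, S, D) applied to the constant function 1 is identically zero; i.e., Σ_{k=0}^{n} C(n,k) [(D - S)∘(D - S + iλ)∘…∘(D - S + i(k-1)λ)] (sin^{n-k}(λx)) = 0. -/

import Mathlib

/-- The binomial-type combination `B(n, λ, U, D)`, with the products ordered
left to right in increasing `j`. -/
noncomputable def binomB {K A : Type*} [Field K] [Ring A] [Algebra K A]
    (n : ℕ) (l : K) (U D : A) : A :=
  ∑ k ∈ Finset.range (n + 1),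
    n.choose k •
      (((List.range k).map (fun j : ℕ => D - U + ((j : K) * l) • (1 : A))).prod * U ^ (n - k))


noncomputable section

def SmoothC : Submodule ℂ (ℝ → ℂ) where
  carrier := {f | ContDiff ℝ (⊤ : ℕ∞) f}
  add_mem' := fun {a b} (ha : ContDiff ℝ (⊤ : ℕ∞) a) (hb : ContDiff ℝ (⊤ : ℕ∞) b) => ha.add hb
  zero_mem' := (contDiff_const : ContDiff ℝ (⊤ : ℕ∞) fun _ => (0 : ℂ))
  smul_mem' := fun c f (hf : ContDiff ℝ (⊤ : ℕ∞) f) => hf.const_smul c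

lemma smoothC_contDiff (f : SmoothC) : ContDiff ℝ (⊤ : ℕ∞) (f : ℝ → ℂ) := f.2

lemma smoothC_mem (f : ℝ → ℂ) (hf : ContDiff ℝ (⊤ : ℕ∞) f) : f ∈ SmoothC := hf

/-- Differentiation `d/dx` as a linear operator on smooth functions. -/
def Dop : Module.End ℂ SmoothC where
  toFun f := ⟨deriv f, smoothC_mem _ (contDiff_infty_iff_deriv.mp (smoothC_contDiff f)).2⟩
  map_add' f g := by
    ext x
    exact deriv_add ((smoothC_contDiff f).differentiable (by simp) x)
      ((smoothC_contDiff g).differentiable (by simp) x)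
  map_smul' c f := by
    ext x
    exact deriv_const_smul c ((smoothC_contDiff f).differentiable (by simp) x)

/-- Multiplication by a smooth function as a linear operator on smooth functions. -/
def Mop (g : ℝ → ℂ) (hg : ContDiff ℝ (⊤ : ℕ∞) g) : Module.End ℂ SmoothC where
  toFun f := ⟨g * f, smoothC_mem _ (hg.mul (smoothC_contDiff f))⟩
  map_add' f g' := by ext x; simp [mul_add]
  map_smul' c f := by ext x; simp; ring

lemma expSmooth (l : ℂ) : ContDiff ℝ (⊤ : ℕ∞) (fun x : ℝ => Complex.exp (l * x)) :=
  ((Complex.contDiff_exp (𝕜 := ℂ)).restrict_scalars ℝ).comp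
    (contDiff_const.mul Complex.ofRealCLM.contDiff)

end

lemma sinSmooth (l : ℝ) : ContDiff ℝ (⊤ : ℕ∞) (fun x : ℝ => Complex.sin ((l : ℂ) * x)) :=
  ((Complex.contDiff_sin (n := (⊤ : ℕ∞))).restrict_scalars ℝ).comp
    (contDiff_const.mul Complex.ofRealCLM.contDiff)
lemma hasDerivAt_cexp_mul (c : ℂ) (x : ℝ) :
    HasDerivAt (fun x : ℝ => Complex.exp (c * x)) (c * Complex.exp (c*x)) x := by
  have h1 : HasDerivAt (fun x : ℝ => c * (x:ℂ)) c x := by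
    simpa using (Complex.ofRealCLM.hasDerivAt (x := x)).const_mul c
  simpa [mul_comm] using h1.cexp

lemma deriv_cexp_mul (c : ℂ) : deriv (fun x : ℝ => Complex.exp (c * x))
    = fun x : ℝ => c * Complex.exp (c*x) := funext fun x => (hasDerivAt_cexp_mul c x).deriv
noncomputable section BB
open Complex Finset

lemma Dop_apply (f : SmoothC) : (Dop f : ℝ → ℂ) = deriv f := rfl
lemma Mop_apply (g : ℝ → ℂ) (hg : ContDiff ℝ (⊤ : ℕ∞) g) (f : SmoothC) :
    ((Mop g hg f : SmoothC) : ℝ → ℂ) = g * (f : ℝ → ℂ) := rfl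

lemma smoothC_hasDerivAt (f : SmoothC) (x : ℝ) :
    HasDerivAt (f : ℝ → ℂ) (deriv (f : ℝ → ℂ) x) x :=
  (((smoothC_contDiff f).differentiable (by simp)) x).hasDerivAt

/-- multiplication by `exp (c x)` -/
def Eop (c : ℂ) : Module.End ℂ SmoothC := Mop (fun x : ℝ => Complex.exp (c*x)) (expSmooth c)

lemma Eop_apply (c : ℂ) (f : SmoothC) (x : ℝ) :
    (Eop c f : ℝ → ℂ) x = Complex.exp (c*x) * (f : ℝ → ℂ) x := rfl

lemma Dop_mul_Eop (c : ℂ) : Dop * Eop c = Eop c * Dop + c • Eop c := by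
  ext f x
  have h := ((hasDerivAt_cexp_mul c x).mul (smoothC_hasDerivAt f x)).deriv
  simp only [Module.End.mul_apply, LinearMap.add_apply, LinearMap.smul_apply]
  show deriv (fun y : ℝ => Complex.exp (c*y) * (f : ℝ → ℂ) y) x = _
  rw [show (fun y : ℝ => Complex.exp (c*y) * (f : ℝ → ℂ) y) = (fun x : ℝ => Complex.exp (c*x)) * (f : ℝ → ℂ) from rfl, h]
  show _ = Complex.exp (c*x) * deriv (f : ℝ → ℂ) x + c • (Complex.exp (c*x) * (f : ℝ → ℂ) x)
  simp [smul_eq_mul]; ring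

lemma Eop_mul_Eop (c d : ℂ) : Eop c * Eop d = Eop (c + d) := by
  ext f x
  simp only [Module.End.mul_apply]
  show Complex.exp (c*x) * (Complex.exp (d*x) * (f : ℝ → ℂ) x) = Complex.exp ((c+d)*x) * _
  rw [add_mul, Complex.exp_add]; ring

end BB
noncomputable section CC
open Complex Finset

variable (l : ℝ)

def Uop : Module.End ℂ SmoothC := Mop (fun x : ℝ => Complex.sin ((l:ℂ)*x)) (sinSmooth l)

/-- abbreviation for μ = I λ -/
def muC : ℂ := Complex.I * l

lemma Uop_split : Uop l = (-(Complex.I/2)) • Eop (muC l) + (Complex.I/2) • Eop (-(muC l)) := by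
  ext f x
  show Complex.sin ((l:ℂ)*x) * (f : ℝ → ℂ) x = _
  simp only [LinearMap.add_apply, LinearMap.smul_apply]
  show _ = (-(Complex.I/2)) • ((Eop (muC l) f : ℝ → ℂ) x) + (Complex.I/2) • ((Eop (-(muC l)) f : ℝ → ℂ) x)
  rw [Eop_apply, Eop_apply]
  rw [Complex.sin]
  have h1 : -((l:ℂ)*x)*Complex.I = -(muC l)*x := by unfold muC; ring
  have h2 : (l:ℂ)*x*Complex.I = muC l * x := by unfold muC; ring
  rw [h1, h2]
  simp [smul_eq_mul]; ring

def Em (m : ℕ) : SmoothC :=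
  ⟨fun x : ℝ => Complex.exp ((-(muC l * m))*x), smoothC_mem _ (expSmooth _)⟩

lemma Em_zero : Em l 0 = (⟨fun _ : ℝ => (1:ℂ), smoothC_mem _ contDiff_const⟩ : SmoothC) := by
  apply Subtype.ext; funext x
  show Complex.exp ((-(muC l * (0:ℕ)))*x) = 1
  simp

lemma Dop_Em (m : ℕ) : Dop (Em l m) = (-(muC l * m)) • Em l m := by
  apply Subtype.ext; funext x
  show deriv (fun x : ℝ => Complex.exp ((-(muC l * m))*x)) x = _
  rw [deriv_cexp_mul]
  rfl

lemma Eop_Em (m : ℕ) : Eop (-(muC l)) (Em l m) = Em l (m+1) := by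
  apply Subtype.ext; funext x
  show Complex.exp ((-(muC l))*x) * Complex.exp ((-(muC l * m))*x) = Complex.exp ((-(muC l * (m+1:ℕ)))*x)
  rw [← Complex.exp_add]
  congr 1
  push_cast
  ring

end CC
set_option synthInstance.maxHeartbeats 1000000
set_option maxHeartbeats 1000000
noncomputable section DD
open Complex Finset

variable (l : ℝ)

def Aop : Module.End ℂ SmoothC := Dop - Uop l

def Pfac (c : ℂ) (j : ℕ) : Module.End ℂ SmoothC :=
  Aop l + ((c + j) * muC l) • (1 : Module.End ℂ SmoothC)

def Pprod (k : ℕ) (c : ℂ) : Module.End ℂ SmoothC :=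
  ((List.range k).map (Pfac l c)).prod

lemma Uop_mul_Eop (c : ℂ) : Uop l * Eop c = Eop c * Uop l := by
  ext f x
  simp only [Module.End.mul_apply]
  show Complex.sin ((l:ℂ)*x) * ((Eop c f : ℝ → ℂ) x) = Complex.exp (c*x) * ((Uop l f : ℝ → ℂ) x)
  rw [Eop_apply]
  show _ = Complex.exp (c*x) * (Complex.sin ((l:ℂ)*x) * (f : ℝ → ℂ) x)
  ring

lemma fac_shift (a b e : ℂ) (hb : a * muC l + e = b * muC l) :
    (Aop l + (a * muC l) • (1 : Module.End ℂ SmoothC)) * Eop e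
      = Eop e * (Aop l + (b * muC l) • (1 : Module.End ℂ SmoothC)) := by
  unfold Aop
  rw [add_mul, sub_mul Dop (Uop l) (Eop e), mul_add (Eop e), mul_sub (Eop e) Dop (Uop l)]
  rw [Dop_mul_Eop, Uop_mul_Eop, smul_mul_assoc, one_mul, mul_smul_comm, mul_one, ← hb]
  module

lemma Pfac_shift_m (c : ℂ) (j : ℕ) :
    Pfac l c j * Eop (-(muC l)) = Eop (-(muC l)) * Pfac l (c-1) j :=
  fac_shift l (c + j) ((c-1) + j) (-(muC l)) (by ring)

lemma Pfac_shift_p (c : ℂ) (j : ℕ) :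
    Pfac l c j * Eop (muC l) = Eop (muC l) * Pfac l (c+1) j :=
  fac_shift l (c + j) ((c+1) + j) (muC l) (by ring)

lemma Pprod_succ (k : ℕ) (c : ℂ) :
    Pprod l (k+1) c = Pprod l k c * Pfac l c k := by
  unfold Pprod
  rw [List.range_succ, List.map_append, List.prod_append]
  simp

lemma Pprod_succ' (k : ℕ) (c : ℂ) :
    Pprod l (k+1) c = Pfac l c 0 * Pprod l k (c+1) := by
  unfold Pprod
  rw [List.range_succ_eq_map, List.map_cons, List.prod_cons, List.map_map]
  refine congrArg _ (congrArg List.prod (List.map_congr_left fun j _ => ?_))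
  show Pfac l c (j+1) = Pfac l (c+1) j
  unfold Pfac
  congr 2
  push_cast
  ring

lemma Pprod_shift_m (k : ℕ) (c : ℂ) :
    Pprod l k c * Eop (-(muC l)) = Eop (-(muC l)) * Pprod l k (c - 1) := by
  induction k generalizing c with
  | zero => simp [Pprod]
  | succ k ih =>
    rw [Pprod_succ, Pprod_succ, mul_assoc, Pfac_shift_m, ← mul_assoc, ih, mul_assoc]

lemma Pprod_shift_p (k : ℕ) (c : ℂ) :
    Pprod l k c * Eop (muC l) = Eop (muC l) * Pprod l k (c + 1) := by
  induction k generalizing c with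
  | zero => simp [Pprod]
  | succ k ih =>
    rw [Pprod_succ, Pprod_succ, mul_assoc, Pfac_shift_p, ← mul_assoc, ih, mul_assoc]

end DD
noncomputable section EE
open Complex Finset

variable (l : ℝ)

def v1 : SmoothC := ⟨fun _ : ℝ => (1:ℂ), smoothC_mem _ contDiff_const⟩

def Wv (n : ℕ) (c : ℂ) : SmoothC :=
  ∑ k ∈ range (n+1), (n.choose k : ℂ) • (Pprod l k c) ((Uop l ^ (n-k)) v1)

lemma lemA (n : ℕ) (c : ℂ) :
    ∑ k ∈ range (n+1), (n.choose k : ℂ) • (Pprod l k c) ((Uop l ^ (n+1-k)) v1)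
      = (-(Complex.I/2)) • Eop (muC l) (Wv l n (c+1))
        + (Complex.I/2) • Eop (-(muC l)) (Wv l n (c-1)) := by
  have step : ∀ k ∈ range (n+1), (n.choose k : ℂ) • (Pprod l k c) ((Uop l ^ (n+1-k)) v1)
      = (-(Complex.I/2)) • Eop (muC l) ((n.choose k:ℂ) • (Pprod l k (c+1)) ((Uop l ^ (n-k)) v1))
        + (Complex.I/2) • Eop (-(muC l)) ((n.choose k:ℂ) • (Pprod l k (c-1)) ((Uop l ^ (n-k)) v1)) := by
    intro k hk
    have hpow : (Uop l ^ (n+1-k)) v1 = Uop l ((Uop l ^ (n-k)) v1) := by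
      rw [show n+1-k = (n-k)+1 from by
        have := Nat.lt_succ_iff.mp (mem_range.mp hk); omega]
      rw [pow_succ']
      rfl
    set w := (Uop l ^ (n-k)) v1 with hw
    rw [hpow]
    have hU : Uop l w = (-(Complex.I/2)) • Eop (muC l) w + (Complex.I/2) • Eop (-(muC l)) w := by
      rw [Uop_split]; rfl
    rw [hU, map_add, map_smul, map_smul]
    have h1 : (Pprod l k c) (Eop (muC l) w) = Eop (muC l) ((Pprod l k (c+1)) w) := by
      rw [← Module.End.mul_apply, ← Module.End.mul_apply, Pprod_shift_p]; rfl
    have h2 : (Pprod l k c) (Eop (-(muC l)) w) = Eop (-(muC l)) ((Pprod l k (c-1)) w) := by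
      rw [← Module.End.mul_apply, ← Module.End.mul_apply, Pprod_shift_m]; rfl
    rw [h1, h2, map_smul, map_smul]
    module
  rw [Finset.sum_congr rfl step, Finset.sum_add_distrib, ← Finset.smul_sum, ← Finset.smul_sum,
    ← map_sum, ← map_sum]
  rfl

lemma lemB (n : ℕ) (c : ℂ) :
    ∑ k ∈ range (n+1), (n.choose k : ℂ) • (Pprod l (k+1) c) ((Uop l ^ (n-k)) v1)
      = (Aop l) (Wv l n (c+1)) + (c * muC l) • Wv l n (c+1) := by
  have step : ∀ k ∈ range (n+1), (n.choose k:ℂ) • (Pprod l (k+1) c) ((Uop l ^ (n-k)) v1)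
      = (Aop l) ((n.choose k:ℂ) • (Pprod l k (c+1)) ((Uop l ^ (n-k)) v1))
        + (c * muC l) • ((n.choose k:ℂ) • (Pprod l k (c+1)) ((Uop l ^ (n-k)) v1)) := by
    intro k hk
    rw [Pprod_succ', Module.End.mul_apply]
    have hPf : Pfac l c 0 = Aop l + (c * muC l) • (1 : Module.End ℂ SmoothC) := by
      unfold Pfac; norm_num
    rw [hPf]
    set y := (Pprod l k (c+1)) ((Uop l ^ (n-k)) v1) with hy
    rw [LinearMap.add_apply, LinearMap.smul_apply, Module.End.one_apply, map_smul]
    module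
  rw [Finset.sum_congr rfl step, Finset.sum_add_distrib, ← map_sum, ← Finset.smul_sum]
  rfl

lemma Wv_rec (n : ℕ) (c : ℂ) :
    Wv l (n+1) c = Dop (Wv l n (c+1)) + (c * muC l) • Wv l n (c+1)
      + (Complex.I/2) • (Eop (-(muC l)) (Wv l n (c-1)) - Eop (-(muC l)) (Wv l n (c+1))) := by
  have expand : Wv l (n+1) c
      = (∑ k ∈ range (n+1), (n.choose k : ℂ) • (Pprod l k c) ((Uop l ^ (n+1-k)) v1))
        + ∑ k ∈ range (n+1), (n.choose k : ℂ) • (Pprod l (k+1) c) ((Uop l ^ (n-k)) v1) := by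
    unfold Wv
    rw [Finset.sum_range_succ' (fun k => ((n+1).choose k : ℂ) • (Pprod l k c) ((Uop l ^ (n+1-k)) v1))]
    have hsplit : ∀ k ∈ range (n+1),
        (((n+1).choose (k+1) : ℕ) : ℂ) • (Pprod l (k+1) c) ((Uop l ^ (n+1-(k+1))) v1)
          = (n.choose (k+1) : ℂ) • (Pprod l (k+1) c) ((Uop l ^ (n-k)) v1)
            + (n.choose k : ℂ) • (Pprod l (k+1) c) ((Uop l ^ (n-k)) v1) := by
      intro k hk
      rw [Nat.succ_sub_succ, Nat.choose_succ_succ]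
      push_cast
      rw [add_smul]
      abel
    rw [Finset.sum_congr rfl hsplit, Finset.sum_add_distrib]
    have hA : (∑ k ∈ range (n+1), (n.choose k:ℂ) • (Pprod l k c) ((Uop l ^ (n+1-k)) v1))
        = (∑ k ∈ range (n+1), (n.choose (k+1):ℂ) • (Pprod l (k+1) c) ((Uop l ^ (n-k)) v1))
          + (((n+1).choose 0 : ℕ):ℂ) • (Pprod l 0 c) ((Uop l ^ (n+1-0)) v1) := by
      rw [Finset.sum_range_succ (fun k => (n.choose (k+1):ℂ) • (Pprod l (k+1) c) ((Uop l ^ (n-k)) v1))]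
      rw [Nat.choose_succ_self]
      push_cast
      rw [zero_smul, add_zero]
      rw [Finset.sum_range_succ' (fun k => (n.choose k:ℂ) • (Pprod l k c) ((Uop l ^ (n+1-k)) v1))]
      congr 1
      · exact Finset.sum_congr rfl fun k _ => by rw [Nat.succ_sub_succ]
      · norm_num
    rw [hA]
    abel
  rw [expand, lemA, lemB]
  have hU : Uop l (Wv l n (c+1)) = (-(Complex.I/2)) • Eop (muC l) (Wv l n (c+1))
      + (Complex.I/2) • Eop (-(muC l)) (Wv l n (c+1)) := by
    rw [Uop_split]; rfl
  unfold Aop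
  rw [LinearMap.sub_apply, hU]
  module

end EE
noncomputable section FF
open Complex Finset

variable (l : ℝ)

def Gam (n m : ℕ) (c : ℂ) : ℂ :=
  if 2*m ≤ n then
    ((n.factorial : ℂ) / ((m.factorial : ℂ) * ((n - 2*m).factorial : ℂ) * 2^m)) * (l:ℂ)^m
      * ∏ j ∈ Finset.range (n - 2*m), ((c + j) * muC l)
  else 0

lemma Gam_big {n m : ℕ} (h : n < 2*m) (c : ℂ) : Gam l n m c = 0 := if_neg (by omega)

lemma fact_ne (k : ℕ) : ((k.factorial : ℂ)) ≠ 0 :=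
  Nat.cast_ne_zero.mpr (Nat.factorial_pos k).ne'

lemma key2 : Complex.I * muC l = -(l:ℂ) := by
  unfold muC
  linear_combination (l:ℂ) * Complex.I_sq

lemma Gam_rec0 (n : ℕ) (c : ℂ) : Gam l (n+1) 0 c = c * muC l * Gam l n 0 (c+1) := by
  unfold Gam
  rw [if_pos (by omega), if_pos (by omega)]
  have e1 : n + 1 - 2*0 = n + 1 := by omega
  have e2 : n - 2*0 = n := by omega
  rw [e1, e2, Finset.prod_range_succ']
  have hcong : ∀ j ∈ Finset.range n, ((c + ((j+1:ℕ):ℂ)) * muC l) = (((c+1) + (j:ℂ)) * muC l) := by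
    intro j _; push_cast; ring
  rw [Finset.prod_congr rfl hcong]
  have hco1 : ((n+1).factorial : ℂ) / (((Nat.factorial 0 : ℕ):ℂ) * ((n+1).factorial:ℂ) * 2^0) = 1 := by
    simp only [Nat.factorial_zero, Nat.cast_one, pow_zero, one_mul, mul_one]
    exact div_self (fact_ne _)
  have hco2 : ((n).factorial : ℂ) / (((Nat.factorial 0 : ℕ):ℂ) * ((n).factorial:ℂ) * 2^0) = 1 := by
    simp only [Nat.factorial_zero, Nat.cast_one, pow_zero, one_mul, mul_one]
    exact div_self (fact_ne _)
  push_cast at hco1 hco2 ⊢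
  rw [hco1, hco2]
  ring

lemma Gam_rec (n m : ℕ) (c : ℂ) :
    Gam l (n+1) (m+1) c
      = (c - (m+1)) * muC l * Gam l n (m+1) (c+1)
        + Complex.I/2 * (Gam l n m (c-1) - Gam l n m (c+1)) := by
  rcases lt_trichotomy n (2*m+1) with h | h | h
  · rcases Nat.lt_or_ge n (2*m) with h2 | h2
    · rw [Gam_big l (by omega), Gam_big l (by omega), Gam_big l (by omega), Gam_big l (by omega)]
      ring
    · have hn : n = 2*m := by omega
      subst hn
      rw [Gam_big l (by omega), Gam_big l (by omega)]
      have hconst : ∀ d : ℂ, Gam l (2*m) m d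
          = ((2*m).factorial : ℂ)/((m.factorial : ℂ) * (((0:ℕ).factorial:ℕ):ℂ) * 2^m) * (l:ℂ)^m := by
        intro d
        unfold Gam
        rw [if_pos (by omega)]
        have e0 : 2*m - 2*m = 0 := by omega
        rw [e0]
        simp
      rw [hconst, hconst]
      ring
  · subst h
    have hL : Gam l (2*m+1+1) (m+1) c
        = ((2*m+2).factorial : ℂ)/(((m+1).factorial : ℂ) * 1 * 2^(m+1)) * (l:ℂ)^(m+1) := by
      unfold Gam
      rw [if_pos (by omega)]
      have e0 : 2*m+1+1 - 2*(m+1) = 0 := by omega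
      rw [e0]
      simp
    have hF : Gam l (2*m+1) (m+1) (c+1) = 0 := Gam_big l (by omega) _
    have hconst : ∀ d : ℂ, Gam l (2*m+1) m d
        = ((2*m+1).factorial : ℂ)/((m.factorial : ℂ) * 1 * 2^m) * (l:ℂ)^m * (d * muC l) := by
      intro d
      unfold Gam
      rw [if_pos (by omega)]
      have e0 : 2*m+1 - 2*m = 1 := by omega
      rw [e0]
      simp [Nat.factorial_one]
    rw [hL, hF, hconst, hconst]
    set K2 := ((2*m+1).factorial : ℂ)/((m.factorial : ℂ) * 1 * 2^m) * (l:ℂ)^m with hK2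
    have hD1 : ((m+1).factorial : ℂ) * 1 * 2^(m+1) ≠ 0 :=
      mul_ne_zero (mul_ne_zero (fact_ne _) one_ne_zero) (pow_ne_zero _ two_ne_zero)
    have hD2 : ((m).factorial : ℂ) * 1 * 2^m ≠ 0 :=
      mul_ne_zero (mul_ne_zero (fact_ne _) one_ne_zero) (pow_ne_zero _ two_ne_zero)
    have hf1 : ((2*m+2).factorial : ℂ) = (2*(m:ℂ)+2) * ((2*m+1).factorial:ℂ) := by
      exact_mod_cast Nat.factorial_succ (2*m+1)
    have hf2 : (((m+1)).factorial : ℂ) = ((m:ℂ)+1) * (m.factorial:ℂ) := by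
      exact_mod_cast Nat.factorial_succ m
    have haux : ((2*m+2).factorial : ℂ)/(((m+1).factorial : ℂ) * 1 * 2^(m+1)) * (l:ℂ)^(m+1)
        = (l:ℂ) * K2 := by
      rw [hK2, div_mul_eq_mul_div, div_mul_eq_mul_div, mul_div_assoc', div_eq_div_iff hD1 hD2,
        hf1, hf2, pow_succ]
      ring
    linear_combination haux + K2 * key2 l
  · obtain ⟨r, hr⟩ : ∃ r, n = 2*m+2+r := ⟨n - (2*m+2), by omega⟩
    subst hr
    unfold Gam
    rw [if_pos (by omega), if_pos (by omega), if_pos (by omega), if_pos (by omega)]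
    have e1 : 2*m+2+r+1 - 2*(m+1) = r+1 := by omega
    have e2 : 2*m+2+r - 2*(m+1) = r := by omega
    have e3 : 2*m+2+r - 2*m = r+2 := by omega
    rw [e1, e2, e3]
    have hcong1 : ∀ j ∈ Finset.range r, ((c + ((j+1:ℕ):ℂ)) * muC l) = (((c+1) + (j:ℂ)) * muC l) := by
      intro j _; push_cast; ring
    have hP1 : (∏ j ∈ Finset.range (r+1), ((c + (j:ℕ)) * muC l))
        = (∏ j ∈ Finset.range r, (((c+1) + (j:ℂ)) * muC l)) * (c * muC l) := by
      rw [Finset.prod_range_succ', Finset.prod_congr rfl hcong1]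
      norm_num
    have hcong2 : ∀ j ∈ Finset.range (r+1), ((c - 1 + ((j+1:ℕ):ℂ)) * muC l) = ((c + (j:ℂ)) * muC l) := by
      intro j _; push_cast; ring
    have hP3 : (∏ j ∈ Finset.range (r+2), ((c - 1 + (j:ℕ)) * muC l))
        = (∏ j ∈ Finset.range r, (((c+1) + (j:ℂ)) * muC l)) * (c * muC l) * ((c-1) * muC l) := by
      rw [Finset.prod_range_succ', Finset.prod_congr rfl hcong2, hP1]
      norm_num
    have hP4 : (∏ j ∈ Finset.range (r+2), ((c + 1 + (j:ℕ)) * muC l))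
        = (∏ j ∈ Finset.range r, (((c+1) + (j:ℂ)) * muC l)) * ((c+1+r) * muC l) * ((c+2+r) * muC l) := by
      rw [Finset.prod_range_succ, Finset.prod_range_succ]
      push_cast
      ring
    rw [hP1, hP3, hP4]
    set Q := ∏ j ∈ Finset.range r, (((c+1) + (j:ℂ)) * muC l) with hQ
    set KL := ((2*m+2+r+1).factorial : ℂ)/(((m+1).factorial : ℂ) * ((r+1).factorial : ℂ) * 2^(m+1)) with hKL
    set K1 := ((2*m+2+r).factorial : ℂ)/(((m+1).factorial : ℂ) * ((r).factorial : ℂ) * 2^(m+1)) with hK1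
    set K2 := ((2*m+2+r).factorial : ℂ)/(((m).factorial : ℂ) * ((r+2).factorial : ℂ) * 2^m) with hK2
    have hf1 : ((2*m+2+r+1).factorial : ℂ) = (2*(m:ℂ)+2+(r:ℂ)+1) * ((2*m+2+r).factorial:ℂ) := by
      exact_mod_cast Nat.factorial_succ (2*m+2+r)
    have hf2 : (((m+1)).factorial : ℂ) = ((m:ℂ)+1) * (m.factorial:ℂ) := by
      exact_mod_cast Nat.factorial_succ m
    have hf3 : (((r+1)).factorial : ℂ) = ((r:ℂ)+1) * (r.factorial:ℂ) := by
      exact_mod_cast Nat.factorial_succ r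
    have hf4 : (((r+2)).factorial : ℂ) = ((r:ℂ)+2) * (((r:ℂ)+1) * (r.factorial:ℂ)) := by
      rw [← hf3]; exact_mod_cast Nat.factorial_succ (r+1)
    have hDL : ((m+1).factorial : ℂ) * ((r+1).factorial : ℂ) * 2^(m+1) ≠ 0 :=
      mul_ne_zero (mul_ne_zero (fact_ne _) (fact_ne _)) (pow_ne_zero _ two_ne_zero)
    have hD1 : ((m+1).factorial : ℂ) * ((r).factorial : ℂ) * 2^(m+1) ≠ 0 :=
      mul_ne_zero (mul_ne_zero (fact_ne _) (fact_ne _)) (pow_ne_zero _ two_ne_zero)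
    have hD2 : ((m).factorial : ℂ) * ((r+2).factorial : ℂ) * 2^m ≠ 0 :=
      mul_ne_zero (mul_ne_zero (fact_ne _) (fact_ne _)) (pow_ne_zero _ two_ne_zero)
    have hK1e : K1 * (2*(m:ℂ)+3+(r:ℂ)) = KL * ((r:ℂ)+1) := by
      rw [hK1, hKL, div_mul_eq_mul_div, div_mul_eq_mul_div, div_eq_div_iff hD1 hDL, hf1, hf3]
      ring
    have hK2e : K2 * (((r:ℂ)+2) * (2*(m:ℂ)+3+(r:ℂ))) = KL * (2*((m:ℂ)+1)) := by
      rw [hK2, hKL, div_mul_eq_mul_div, div_mul_eq_mul_div, div_eq_div_iff hD2 hDL, hf1, hf2,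
        hf3, hf4, pow_succ]
      ring
    have hN2 : ((2*(m:ℂ)+3+(r:ℂ)) * ((r:ℂ)+2)) ≠ 0 := by
      have h1 : ((2*m+3+r : ℕ) : ℂ) ≠ 0 := Nat.cast_ne_zero.mpr (by omega)
      have h2 : ((r+2 : ℕ) : ℂ) ≠ 0 := Nat.cast_ne_zero.mpr (by omega)
      push_cast at h1 h2
      exact mul_ne_zero (by convert h1 using 1) (by convert h2 using 1)
    apply mul_left_cancel₀ hN2
    linear_combination (-((c - ((m:ℂ)+1)) * muC l * (l:ℂ)^(m+1) * Q * ((r:ℂ)+2))) * hK1e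
      + (-(Complex.I * muC l^2 * (l:ℂ)^m * Q * ((c*(c-1) - (c+1+(r:ℂ))*(c+2+(r:ℂ)))) / 2)) * hK2e
      + (-(KL * ((m:ℂ)+1) * muC l * (l:ℂ)^m * Q
          * ((c*(c-1) - (c+1+(r:ℂ))*(c+2+(r:ℂ)))))) * key2 l

end FF
noncomputable section GG
open Complex Finset

variable (l : ℝ)

lemma Wv_closed : ∀ (n : ℕ) (c : ℂ), Wv l n c = ∑ m ∈ range (n+1), Gam l n m c • Em l m := by
  intro n
  induction n with
  | zero =>
    intro c
    have h0 : Wv l 0 c = v1 := by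
      unfold Wv Pprod
      simp
    have h1 : Gam l 0 0 c = 1 := by
      unfold Gam
      simp
    rw [h0, Finset.sum_range_one, h1, one_smul, Em_zero]
    rfl
  | succ n ih =>
    intro c
    rw [Wv_rec, ih (c+1), ih (c-1)]
    have h1 : Dop (∑ m ∈ range (n+1), Gam l n m (c+1) • Em l m)
        + (c * muC l) • ∑ m ∈ range (n+1), Gam l n m (c+1) • Em l m
        = ∑ m ∈ range (n+1), ((c - (m:ℂ)) * muC l * Gam l n m (c+1)) • Em l m := by
      rw [map_sum, Finset.smul_sum, ← Finset.sum_add_distrib]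
      refine Finset.sum_congr rfl fun m _ => ?_
      rw [map_smul, Dop_Em, smul_smul, smul_smul, ← add_smul]
      congr 1
      ring
    have hC : Eop (-(muC l)) (∑ m ∈ range (n+1), Gam l n m (c-1) • Em l m)
        = ∑ m ∈ range (n+1), Gam l n m (c-1) • Em l (m+1) := by
      rw [map_sum]
      exact Finset.sum_congr rfl fun m _ => by rw [map_smul, Eop_Em]
    have hD : Eop (-(muC l)) (∑ m ∈ range (n+1), Gam l n m (c+1) • Em l m)
        = ∑ m ∈ range (n+1), Gam l n m (c+1) • Em l (m+1) := by
      rw [map_sum]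
      exact Finset.sum_congr rfl fun m _ => by rw [map_smul, Eop_Em]
    have h2 : (Complex.I/2) • (Eop (-(muC l)) (∑ m ∈ range (n+1), Gam l n m (c-1) • Em l m)
          - Eop (-(muC l)) (∑ m ∈ range (n+1), Gam l n m (c+1) • Em l m))
        = ∑ m ∈ range (n+1), ((Complex.I/2) * (Gam l n m (c-1) - Gam l n m (c+1))) • Em l (m+1) := by
      rw [hC, hD, ← Finset.sum_sub_distrib, Finset.smul_sum]
      refine Finset.sum_congr rfl fun m _ => ?_
      rw [smul_sub, smul_smul, smul_smul, ← sub_smul, mul_sub]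
    rw [h1, h2]
    have hRHS : ∑ m ∈ range (n+1+1), Gam l (n+1) m c • Em l m
        = (∑ m ∈ range (n+1), ((c - (m:ℂ)) * muC l * Gam l n m (c+1)) • Em l m)
          + ∑ m ∈ range (n+1), ((Complex.I/2) * (Gam l n m (c-1) - Gam l n m (c+1))) • Em l (m+1) := by
      rw [Finset.sum_range_succ' (fun m => Gam l (n+1) m c • Em l m)]
      have hsplit : ∀ m ∈ range (n+1), Gam l (n+1) (m+1) c • Em l (m+1)
          = ((c - ((m:ℂ)+1)) * muC l * Gam l n (m+1) (c+1)) • Em l (m+1)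
            + ((Complex.I/2) * (Gam l n m (c-1) - Gam l n m (c+1))) • Em l (m+1) := by
        intro m _
        rw [Gam_rec, add_smul]
      rw [Finset.sum_congr rfl hsplit, Finset.sum_add_distrib]
      have hF : (∑ m ∈ range (n+1), ((c - ((m:ℂ)+1)) * muC l * Gam l n (m+1) (c+1)) • Em l (m+1))
          + Gam l (n+1) 0 c • Em l 0
          = ∑ m ∈ range (n+1), ((c - (m:ℂ)) * muC l * Gam l n m (c+1)) • Em l m := by
        have ecast : ∀ m ∈ range (n+1), ((c - ((m:ℂ)+1)) * muC l * Gam l n (m+1) (c+1)) • Em l (m+1)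
            = ((c - (((m+1):ℕ):ℂ)) * muC l * Gam l n (m+1) (c+1)) • Em l (m+1) := by
          intro m _
          congr 2
          push_cast
          ring
        have e0 : Gam l (n+1) 0 c • Em l 0
            = ((c - ((0:ℕ):ℂ)) * muC l * Gam l n 0 (c+1)) • Em l 0 := by
          rw [Gam_rec0]
          congr 1
          push_cast
          ring
        rw [Finset.sum_congr rfl ecast, e0,
          ← Finset.sum_range_succ' (fun m => ((c - ((m:ℕ):ℂ)) * muC l * Gam l n m (c+1)) • Em l m)]
        rw [Finset.sum_range_succ]
        rw [Gam_big l (by omega)]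
        simp
      rw [← hF]
      abel
    rw [hRHS]

lemma Gam_odd_zero {n : ℕ} (hn : Odd n) (m : ℕ) : Gam l n m 0 = 0 := by
  unfold Gam
  split_ifs with h
  · have hlt : 0 < n - 2*m := by
      rcases hn with ⟨t, ht⟩
      omega
    have hmem : (0:ℕ) ∈ Finset.range (n - 2*m) := Finset.mem_range.mpr hlt
    rw [Finset.prod_eq_zero hmem (by simp)]
    ring
  · rfl

lemma Wv_odd_zero {n : ℕ} (hn : Odd n) : Wv l n 0 = 0 := by
  rw [Wv_closed]
  exact Finset.sum_eq_zero fun m _ => by rw [Gam_odd_zero l hn, zero_smul]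

end GG

/-- For odd `n`, `B(n, iλ, sin(λx)·, d/dx)` applied to the constant function `1` is zero. -/
theorem binomB_sin_odd_vanishes (l : ℝ) (n : ℕ) (hn : Odd n) :
    binomB n (Complex.I * (l : ℂ))
      (Mop (fun x : ℝ => Complex.sin ((l : ℂ) * x)) (sinSmooth l)) Dop
      ⟨fun _ : ℝ => (1 : ℂ), smoothC_mem _ contDiff_const⟩ = 0 := by
  show (binomB n (Complex.I * (l:ℂ)) (Uop l) Dop) v1 = 0
  unfold binomB
  rw [LinearMap.sum_apply]
  have hterm : ∀ k ∈ Finset.range (n+1),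
      (n.choose k • (((List.range k).map (fun j : ℕ =>
          Dop - Uop l + (((j:ℕ):ℂ) * (Complex.I*(l:ℂ))) • (1:Module.End ℂ SmoothC))).prod
        * Uop l ^ (n-k))) v1
      = (n.choose k : ℂ) • (Pprod l k 0) ((Uop l ^ (n-k)) v1) := by
    intro k _
    have hlist : ((List.range k).map (fun j : ℕ =>
        Dop - Uop l + (((j:ℕ):ℂ) * (Complex.I*(l:ℂ))) • (1:Module.End ℂ SmoothC))).prod
        = Pprod l k 0 := by
      unfold Pprod
      congr 1
      apply List.map_congr_left
      intro j _
      unfold Pfac Aop muC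
      rw [zero_add]
    rw [LinearMap.smul_apply, Module.End.mul_apply, hlist, ← Nat.cast_smul_eq_nsmul ℂ]
  rw [Finset.sum_congr rfl hterm]
  exact Wv_odd_zero l hn
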